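/- Let H be a self-adjoint operator and A a hermitian (symmetric) densely defined operator on a Hilbert space ℋ. Assume e^{-itH} leaves D(A) ∩ D(H) invariant for all t ∈ ℝ, and for any ψ₀ ∈ D(A) ∩ D(H) the norm ‖A e^{-itH} ψ₀‖ is bounded uniformly for t in bounded intervals. Then for ψ₀ ∈ D(A) ∩ D(H), the function t ↦ ⟨ψ(t), A ψ(t)⟩ with ψ(t) = e^{-itH}ψ₀ is continuously differentiable and satisfies d/dt ⟨ψ(t), A ψ(t)⟩ = i(⟨Hψ(t), Aψ(t)⟩ − ⟨Aψ(t), Hψ(t)⟩). -/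

import Mathlib

open Filter

local notation "⟪" x ", " y "⟫" => @inner ℂ _ _ x y

/-- **Abstract Ehrenfest theorem.**
`H` is a self-adjoint operator on the complex Hilbert space `ℍ`, encoded (via Stone's
theorem) through the strongly continuous one-parameter unitary group `U t = e^{-itH}`
which it generates, together with its domain `DH` on which it is symmetric, invariant,
and gives the derivative of the group.  `A` is a densely defined hermitean (symmetric)
operator with domain `DA`.  Assume `e^{-itH}` leaves `DA ∩ DH` invariant (H2) and that
`‖A e^{-itH} ψ₀‖` is bounded uniformly for `t` in bounded sets (H3).  Then for
`ψ₀ ∈ DA ∩ DH` the expected value `t ↦ ⟨ψ(t), A ψ(t)⟩`, `ψ(t) = e^{-itH} ψ₀`, is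
continuously differentiable with derivative `i (⟨Hψ(t), Aψ(t)⟩ − ⟨Aψ(t), Hψ(t)⟩)`. -/
theorem abstract_ehrenfest
    {ℍ : Type*} [NormedAddCommGroup ℍ] [InnerProductSpace ℂ ℍ] [CompleteSpace ℍ]
    (DH DA : Set ℍ) (H A : ℍ → ℍ) (U : ℝ → ℍ →L[ℂ] ℍ)
    (hDH : Dense DH) (hDA : Dense DA)
    (hHsym : ∀ φ ∈ DH, ∀ ψ ∈ DH, ⟪H φ, ψ⟫ = ⟪φ, H ψ⟫)
    (hAsym : ∀ φ ∈ DA, ∀ ψ ∈ DA, ⟪A φ, ψ⟫ = ⟪φ, A ψ⟫)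
    (hU0 : U 0 = ContinuousLinearMap.id ℂ ℍ)
    (hUgrp : ∀ s t : ℝ, U (s + t) = (U s).comp (U t))
    (hUunitary : ∀ (t : ℝ) (x : ℍ), ‖U t x‖ = ‖x‖)
    (hUDH : ∀ (t : ℝ), ∀ ψ ∈ DH, U t ψ ∈ DH)
    (hgen : ∀ ψ ∈ DH, ∀ t : ℝ,
      HasDerivAt (fun s => U s ψ) (-(Complex.I) • H (U t ψ)) t)
    -- (H2): invariance of `DA ∩ DH` under the propagator
    (hinv : ∀ (t : ℝ), ∀ ψ ∈ DA ∩ DH, U t ψ ∈ DA ∩ DH)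
    -- (H3): uniform boundedness of `‖A e^{-itH} ψ₀‖` on bounded time intervals
    (hbdd : ∀ ψ₀ ∈ DA ∩ DH, ∀ I : Set ℝ, Bornology.IsBounded I →
      ∃ M : ℝ, ∀ t ∈ I, ‖A (U t ψ₀)‖ ≤ M)
    (ψ₀ : ℍ) (hψ₀ : ψ₀ ∈ DA ∩ DH) :
    (∀ t : ℝ, HasDerivAt (fun s => ⟪U s ψ₀, A (U s ψ₀)⟫)
        (Complex.I * (⟪H (U t ψ₀), A (U t ψ₀)⟫ - ⟪A (U t ψ₀), H (U t ψ₀)⟫)) t) ∧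
    Continuous (fun t : ℝ =>
        Complex.I * (⟪H (U t ψ₀), A (U t ψ₀)⟫ - ⟪A (U t ψ₀), H (U t ψ₀)⟫)) := by
  obtain ⟨hψA, hψH⟩ := hψ₀
  set ψ : ℝ → ℍ := fun s => U s ψ₀ with hψdef
  have hψDA : ∀ t, ψ t ∈ DA := fun t => (hinv t ψ₀ ⟨hψA, hψH⟩).1
  have hψDH : ∀ t, ψ t ∈ DH := fun t => (hinv t ψ₀ ⟨hψA, hψH⟩).2
  have hderiv : ∀ t, HasDerivAt ψ (-(Complex.I) • H (ψ t)) t := fun t => hgen ψ₀ hψH t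
  have hψcont : Continuous ψ :=
    continuous_iff_continuousAt.mpr fun t => (hderiv t).continuousAt
  -- local bound around any point
  have hMex : ∀ t : ℝ, ∃ M, 0 ≤ M ∧ ∀ s ∈ Metric.ball t 1, ‖A (ψ s)‖ ≤ M := by
    intro t
    obtain ⟨M, hM⟩ := hbdd ψ₀ ⟨hψA, hψH⟩ (Metric.ball t 1) Metric.isBounded_ball
    exact ⟨M, le_trans (norm_nonneg _) (hM t (Metric.mem_ball_self one_pos)), hM⟩
  -- weak continuity of `t ↦ A ψ(t)`
  have weak : ∀ (χ : ℍ) (t₀ : ℝ), ContinuousAt (fun s => ⟪χ, A (ψ s)⟫) t₀ := by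
    intro χ t₀
    obtain ⟨M, hM0, hM⟩ := hMex t₀
    rw [Metric.continuousAt_iff]
    intro ε hε
    obtain ⟨φ, hφD, hφ⟩ := hDA.exists_dist_lt χ (show (0:ℝ) < ε/(4*(M+1)) by positivity)
    have hφn : ‖χ - φ‖ ≤ ε/(4*(M+1)) := by
      rw [dist_eq_norm] at hφ; exact hφ.le
    have hc : ContinuousAt (fun s => ⟪φ, A (ψ s)⟫) t₀ := by
      have he : (fun s => ⟪φ, A (ψ s)⟫) = fun s => ⟪A φ, ψ s⟫ := by
        funext s; exact (hAsym φ hφD (ψ s) (hψDA s)).symm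
      rw [he]
      exact (continuous_const.inner hψcont).continuousAt
    obtain ⟨δ₂, hδ₂, h2⟩ := Metric.continuousAt_iff.mp hc (ε/2) (by positivity)
    refine ⟨min 1 δ₂, lt_min one_pos hδ₂, ?_⟩
    intro s hs
    have hsM : ‖A (ψ s)‖ ≤ M := hM s (lt_of_lt_of_le hs (min_le_left _ _))
    have ht0M : ‖A (ψ t₀)‖ ≤ M := hM t₀ (Metric.mem_ball_self one_pos)
    have h2' := h2 (lt_of_lt_of_le hs (min_le_right _ _))
    have key : ∀ y : ℝ, ‖A (ψ y)‖ ≤ M → ‖⟪χ, A (ψ y)⟫ - ⟪φ, A (ψ y)⟫‖ ≤ ε/4 := by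
      intro y hy
      have k1 : ‖⟪χ, A (ψ y)⟫ - ⟪φ, A (ψ y)⟫‖ ≤ ‖χ - φ‖ * ‖A (ψ y)‖ := by
        rw [← inner_sub_left]; exact norm_inner_le_norm _ _
      have k2 : ‖χ - φ‖ * ‖A (ψ y)‖ ≤ (ε/(4*(M+1))) * M :=
        mul_le_mul hφn hy (norm_nonneg _) (by positivity)
      have k3 : (ε/(4*(M+1))) * M ≤ ε/4 := by
        rw [div_mul_eq_mul_div, div_le_div_iff₀ (by positivity) (by positivity)]
        nlinarith
      linarith
    calc dist ⟪χ, A (ψ s)⟫ ⟪χ, A (ψ t₀)⟫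
        ≤ dist ⟪χ, A (ψ s)⟫ ⟪φ, A (ψ s)⟫ + dist ⟪φ, A (ψ s)⟫ ⟪φ, A (ψ t₀)⟫
          + dist ⟪φ, A (ψ t₀)⟫ ⟪χ, A (ψ t₀)⟫ := dist_triangle4 _ _ _ _
      _ < ε := by
          have d1 : dist ⟪χ, A (ψ s)⟫ ⟪φ, A (ψ s)⟫ ≤ ε/4 := by
            rw [dist_eq_norm]; exact key s hsM
          have d3 : dist ⟪φ, A (ψ t₀)⟫ ⟪χ, A (ψ t₀)⟫ ≤ ε/4 := by
            rw [dist_comm, dist_eq_norm]; exact key t₀ ht0M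
          linarith
  -- strong continuity of U on all of ℍ
  have Ucont : ∀ x : ℍ, Continuous fun t => U t x := by
    intro x
    refine continuous_iff_continuousAt.mpr fun t₀ => ?_
    rw [Metric.continuousAt_iff]
    intro ε hε
    obtain ⟨φ, hφD, hφ⟩ := hDH.exists_dist_lt x (show (0:ℝ) < ε/3 by positivity)
    rw [dist_eq_norm] at hφ
    have hc : ContinuousAt (fun t => U t φ) t₀ := (hgen φ hφD t₀).continuousAt
    obtain ⟨δ, hδ, h2⟩ := Metric.continuousAt_iff.mp hc (ε/3) (by positivity)
    refine ⟨δ, hδ, ?_⟩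
    intro s hs
    have e : ∀ r : ℝ, dist (U r x) (U r φ) = ‖x - φ‖ := by
      intro r; rw [dist_eq_norm, ← map_sub, hUunitary]
    have h2' := h2 hs
    calc dist (U s x) (U t₀ x)
        ≤ dist (U s x) (U s φ) + dist (U s φ) (U t₀ φ) + dist (U t₀ φ) (U t₀ x) :=
          dist_triangle4 _ _ _ _
      _ < ε := by
          have e1 := e s
          have e2 : dist (U t₀ φ) (U t₀ x) = ‖x - φ‖ := by rw [dist_comm]; exact e t₀
          linarith
  -- H commutes with the propagator on ψ₀
  have HU : ∀ t, H (ψ t) = U t (H ψ₀) := by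
    intro t
    have hU0' : U 0 ψ₀ = ψ₀ := by rw [hU0]; rfl
    have d0 : HasDerivAt (fun r => U r ψ₀) (-(Complex.I) • H ψ₀) 0 := by
      have h := hgen ψ₀ hψH 0
      rwa [hU0'] at h
    have h1 : HasDerivAt (fun s : ℝ => s - t) 1 t := (hasDerivAt_id t).sub_const t
    have d0' : HasDerivAt (fun r => U r ψ₀) (-(Complex.I) • H ψ₀) (t - t) := by
      rw [sub_self]; exact d0
    have dshift : HasDerivAt (fun s => U (s - t) ψ₀) (-(Complex.I) • H ψ₀) t := by
      have h := HasDerivAt.scomp (x := t) (h := fun s : ℝ => s - t)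
        (g₁ := fun r : ℝ => U r ψ₀) d0' h1
      simpa [Function.comp_def] using h
    have dcomp : HasDerivAt (fun s => U t (U (s - t) ψ₀)) (U t (-(Complex.I) • H ψ₀)) t := by
      have h := HasFDerivAt.comp_hasDerivAt t
        (((U t).restrictScalars ℝ).hasFDerivAt (x := U (t - t) ψ₀)) dshift
      simpa [Function.comp_def] using h
    have funeq : (fun s => U t (U (s - t) ψ₀)) = fun s => U s ψ₀ := by
      funext s
      calc U t (U (s - t) ψ₀) = ((U t).comp (U (s - t))) ψ₀ := rfl
        _ = U (t + (s - t)) ψ₀ := by rw [← hUgrp]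
        _ = U s ψ₀ := by rw [show t + (s - t) = s from by ring]
    rw [funeq] at dcomp
    have huni : U t (-(Complex.I) • H ψ₀) = -(Complex.I) • H (ψ t) :=
      dcomp.unique (hderiv t)
    rw [map_smul] at huni
    exact (smul_right_injective ℍ (neg_ne_zero.mpr Complex.I_ne_zero) huni).symm
  have hHcont : Continuous fun t => H (ψ t) := by
    have he : (fun t => H (ψ t)) = fun t => U t (H ψ₀) := funext HU
    rw [he]; exact Ucont (H ψ₀)
  -- continuity of t ↦ ⟪Hψ t, Aψ t⟫
  have gcont : Continuous fun t => ⟪H (ψ t), A (ψ t)⟫ := by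
    refine continuous_iff_continuousAt.mpr fun t₀ => ?_
    obtain ⟨M, hM0, hM⟩ := hMex t₀
    have hev : ∀ᶠ s in nhds t₀, ‖A (ψ s)‖ ≤ M :=
      Filter.eventually_of_mem (Metric.ball_mem_nhds t₀ one_pos) hM
    have t1 : Tendsto (fun s => ⟪H (ψ s) - H (ψ t₀), A (ψ s)⟫) (nhds t₀) (nhds 0) := by
      apply squeeze_zero_norm' (a := fun s => ‖H (ψ s) - H (ψ t₀)‖ * M)
      · filter_upwards [hev] with s hs
        calc ‖⟪H (ψ s) - H (ψ t₀), A (ψ s)⟫‖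
            ≤ ‖H (ψ s) - H (ψ t₀)‖ * ‖A (ψ s)‖ := norm_inner_le_norm _ _
          _ ≤ ‖H (ψ s) - H (ψ t₀)‖ * M := mul_le_mul_of_nonneg_left hs (norm_nonneg _)
      · have hcc : Continuous fun s => ‖H (ψ s) - H (ψ t₀)‖ * M :=
          ((hHcont.sub continuous_const).norm).mul continuous_const
        have := hcc.tendsto t₀
        simpa using this
    have t2 : Tendsto (fun s => ⟪H (ψ t₀), A (ψ s)⟫) (nhds t₀)
        (nhds ⟪H (ψ t₀), A (ψ t₀)⟫) := weak (H (ψ t₀)) t₀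
    have hsum := t1.add t2
    rw [zero_add] at hsum
    exact hsum.congr fun s => by rw [← inner_add_left, sub_add_cancel]
  -- the two conclusions
  constructor
  · intro t
    rw [hasDerivAt_iff_tendsto_slope]
    obtain ⟨M, hM0, hM⟩ := hMex t
    have hev : ∀ᶠ s in nhdsWithin t {t}ᶜ, ‖A (ψ s)‖ ≤ M :=
      Filter.eventually_of_mem (nhdsWithin_le_nhds (Metric.ball_mem_nhds t one_pos)) hM
    have hslope : Tendsto (slope ψ t) (nhdsWithin t {t}ᶜ) (nhds (-(Complex.I) • H (ψ t))) :=
      hasDerivAt_iff_tendsto_slope.mp (hderiv t)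
    have ta : Tendsto (fun s => ⟪slope ψ t s - (-(Complex.I) • H (ψ t)), A (ψ s)⟫)
        (nhdsWithin t {t}ᶜ) (nhds 0) := by
      apply squeeze_zero_norm' (a := fun s => ‖slope ψ t s - (-(Complex.I) • H (ψ t))‖ * M)
      · filter_upwards [hev] with s hs
        calc ‖⟪slope ψ t s - (-(Complex.I) • H (ψ t)), A (ψ s)⟫‖
            ≤ ‖slope ψ t s - (-(Complex.I) • H (ψ t))‖ * ‖A (ψ s)‖ := norm_inner_le_norm _ _
          _ ≤ ‖slope ψ t s - (-(Complex.I) • H (ψ t))‖ * M :=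
            mul_le_mul_of_nonneg_left hs (norm_nonneg _)
      · have hz : Tendsto (fun s => slope ψ t s - (-(Complex.I) • H (ψ t)))
            (nhdsWithin t {t}ᶜ)
            (nhds ((-(Complex.I) • H (ψ t)) - (-(Complex.I) • H (ψ t)))) :=
          hslope.sub tendsto_const_nhds
        rw [sub_self] at hz
        have h3 := hz.norm.mul_const M
        rw [norm_zero, zero_mul] at h3
        exact h3
    have tb : Tendsto (fun s => ⟪(-(Complex.I) • H (ψ t) : ℍ), A (ψ s)⟫)
        (nhdsWithin t {t}ᶜ) (nhds ⟪(-(Complex.I) • H (ψ t) : ℍ), A (ψ t)⟫) :=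
      ((weak (-(Complex.I) • H (ψ t)) t).tendsto).mono_left nhdsWithin_le_nhds
    have t1 : Tendsto (fun s => ⟪slope ψ t s, A (ψ s)⟫) (nhdsWithin t {t}ᶜ)
        (nhds ⟪(-(Complex.I) • H (ψ t) : ℍ), A (ψ t)⟫) := by
      have hsum := ta.add tb
      rw [zero_add] at hsum
      refine hsum.congr fun s => ?_
      rw [← inner_add_left, sub_add_cancel]
    have t2 : Tendsto (fun s => ⟪A (ψ t), slope ψ t s⟫) (nhdsWithin t {t}ᶜ)
        (nhds ⟪A (ψ t), (-(Complex.I) • H (ψ t) : ℍ)⟫) :=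
      tendsto_const_nhds.inner hslope
    have hsum := t1.add t2
    have heq : ∀ s, slope (fun s => ⟪ψ s, A (ψ s)⟫) t s
        = ⟪slope ψ t s, A (ψ s)⟫ + ⟪A (ψ t), slope ψ t s⟫ := by
      intro s
      have hd : ⟪ψ s, A (ψ s)⟫ - ⟪ψ t, A (ψ t)⟫
          = ⟪ψ s - ψ t, A (ψ s)⟫ + ⟪A (ψ t), ψ s - ψ t⟫ := by
        rw [inner_sub_left, inner_sub_right, hAsym (ψ t) (hψDA t) (ψ s) (hψDA s),
          hAsym (ψ t) (hψDA t) (ψ t) (hψDA t)]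
        ring
      have smulL : ∀ (r : ℝ) (x y : ℍ), ⟪r • x, y⟫ = r • ⟪x, y⟫ :=
        fun r x y => inner_smul_real_left x y r
      have smulR : ∀ (r : ℝ) (x y : ℍ), ⟪x, r • y⟫ = r • ⟪x, y⟫ :=
        fun r x y => inner_smul_real_right x y r
      rw [slope_def_module, slope_def_module, hd, smul_add, smulL, smulR]
    have hval : ⟪(-(Complex.I) • H (ψ t) : ℍ), A (ψ t)⟫
          + ⟪A (ψ t), (-(Complex.I) • H (ψ t) : ℍ)⟫
        = Complex.I * (⟪H (ψ t), A (ψ t)⟫ - ⟪A (ψ t), H (ψ t)⟫) := by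
      rw [inner_smul_left, inner_smul_right]
      simp only [map_neg, Complex.conj_I, neg_neg]
      ring
    rw [← hval]
    exact hsum.congr fun s => (heq s).symm
  · have hc : Continuous (fun t => Complex.I *
        (⟪H (ψ t), A (ψ t)⟫ - (starRingEnd ℂ) ⟪H (ψ t), A (ψ t)⟫)) :=
      continuous_const.mul (gcont.sub ((Complex.continuous_conj).comp gcont))
    refine hc.congr fun t => ?_
    rw [inner_conj_symm]
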